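/- Suppose demand is symmetric, θ_i = θ > 0 for all i ∈ L, and 0 ≤ I < W. If an optimal tuple for the platform's problem exists, then there exists an optimal tuple (p, f, x, y) such that p_{ij} = p_{ji}, f_{ij}^τ = f_{ji}^τ, and y_{ij}^τ = 0 for all i, j, τ ∈ L. -/

import Mathlib

open Finset

/-- Feasibility of a tuple `(p, f, x, y)` for the platform's problem:
prices in `[0,1]`, nonnegativity, flow balance, full dispatch,
market clearing, and the supply constraint. -/
def Feasible {L : Type*} [Fintype L] (θ : L → ℝ) (α : L → L → ℝ) (s : L → ℝ)
    (p : L → L → ℝ) (f : L → L → L → ℝ) (x : L → L → ℝ) (y : L → L → L → ℝ) : Prop :=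
  (∀ i j, 0 ≤ p i j ∧ p i j ≤ 1) ∧
  (∀ i j τ, 0 ≤ f i j τ) ∧ (∀ i j τ, 0 ≤ y i j τ) ∧ (∀ i τ, 0 ≤ x i τ) ∧
  (∀ i τ, x i τ = ∑ j, (f j i τ + y j i τ)) ∧
  (∀ i τ, (∑ j, (f i j τ + y i j τ)) = x i τ) ∧
  (∀ i j, (∑ τ, f i j τ) = θ i * α i j * (1 - p i j)) ∧
  (∀ τ, (∑ i, x i τ) ≤ s τ)

/-- The platform's revenue objective. -/
noncomputable def Revenue {L : Type*} [Fintype L] (W I : ℝ)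
    (p : L → L → ℝ) (f : L → L → L → ℝ) (x : L → L → ℝ) : ℝ :=
  (∑ i, ∑ j, ∑ τ, f i j τ * p i j) - W * (∑ i, ∑ τ, x i τ) + I * (∑ τ, x τ τ)

/-- With symmetric demand, `θ_i = θ > 0`, and `0 ≤ I < W`, if an optimal tuple exists
then there exists an optimal tuple `(p, f, x, y)` with `p_{ij} = p_{ji}`,
`f_{ij}^τ = f_{ji}^τ`, and `y_{ij}^τ = 0` for all `i, j, τ`. -/
theorem stmt1 {L : Type*} [Fintype L] (θfun : L → ℝ) (α : L → L → ℝ) (s : L → ℝ)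
    (W I θ : ℝ)
    (hθ : ∀ i, θfun i = θ) (hθpos : 0 < θ)
    (hα0 : ∀ i j, 0 ≤ α i j) (hα1 : ∀ i j, α i j ≤ 1) (hαsum : ∀ i, (∑ j, α i j) = 1)
    (hs : ∀ τ, 0 ≤ s τ)
    (hsym : ∀ i j k l, θfun i = θfun k ∧ α i j = α k l)
    (hInonneg : 0 ≤ I) (hIW : I < W)
    (hexists : ∃ p f x y, Feasible θfun α s p f x y ∧
      ∀ p' f' x' y', Feasible θfun α s p' f' x' y' →
        Revenue W I p' f' x' ≤ Revenue W I p f x) :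
    ∃ p f x y, Feasible θfun α s p f x y ∧
      (∀ p' f' x' y', Feasible θfun α s p' f' x' y' →
        Revenue W I p' f' x' ≤ Revenue W I p f x) ∧
      (∀ i j, p i j = p j i) ∧
      (∀ i j τ, f i j τ = f j i τ) ∧
      (∀ i j τ, y i j τ = 0) := by
  obtain ⟨p, f, x, y, hfeas, hopt⟩ := hexists
  obtain ⟨hp, hf0, hy0, hx0, hfb, hfd, hmc, hsup⟩ := hfeas
  -- symmetrized prices and flows, empty relocations dropped
  set p1 : L → L → ℝ := fun i j => (p i j + p j i) / 2 with hp1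
  set f1 : L → L → L → ℝ := fun i j τ => (f i j τ + f j i τ) / 2 with hf1
  set x2 : L → L → ℝ := fun i τ => ∑ j, f1 j i τ with hx2
  have hαs : ∀ i j, α j i = α i j := fun i j => (hsym j i i j).2
  -- market clearing for the new tuple
  have hmc1 : ∀ i j, (∑ τ, f1 i j τ) = θfun i * α i j * (1 - p1 i j) := by
    intro i j
    have h1 := hmc i j
    have h2 := hmc j i
    have e : (∑ τ, f1 i j τ) = ((∑ τ, f i j τ) + (∑ τ, f j i τ)) / 2 := by
      simp only [hf1]
      rw [← Finset.sum_div, Finset.sum_add_distrib]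
    rw [e, h1, h2, hθ i, hθ j, hαs i j]
    simp only [hp1]
    ring
  -- x2 in terms of f sums
  have hx2eq : ∀ i τ, x2 i τ = ((∑ j, f j i τ) + (∑ j, f i j τ)) / 2 := by
    intro i τ
    simp only [hx2, hf1]
    rw [← Finset.sum_div, Finset.sum_add_distrib]
  -- flow balance / full dispatch split for original tuple
  have hsplit1 : ∀ i τ, x i τ = (∑ j, f j i τ) + (∑ j, y j i τ) := by
    intro i τ; rw [hfb i τ, Finset.sum_add_distrib]
  have hsplit2 : ∀ i τ, (∑ j, f i j τ) + (∑ j, y i j τ) = x i τ := by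
    intro i τ; rw [← Finset.sum_add_distrib]; exact hfd i τ
  have hYnn : ∀ i τ, 0 ≤ x i τ - x2 i τ := by
    intro i τ
    have h1 := hsplit1 i τ
    have h2 := hsplit2 i τ
    have h3 : 0 ≤ ∑ j, y j i τ := Finset.sum_nonneg fun j _ => hy0 j i τ
    have h4 : 0 ≤ ∑ j, y i j τ := Finset.sum_nonneg fun j _ => hy0 i j τ
    rw [hx2eq i τ]
    linarith
  -- feasibility of the new tuple
  have hfeas1 : Feasible θfun α s p1 f1 x2 (fun _ _ _ => 0) := by
    refine ⟨?_, ?_, ?_, ?_, ?_, ?_, hmc1, ?_⟩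
    · intro i j
      obtain ⟨a1, a2⟩ := hp i j
      obtain ⟨b1, b2⟩ := hp j i
      constructor <;> (simp only [hp1]; linarith)
    · intro i j τ
      have := hf0 i j τ; have := hf0 j i τ
      simp only [hf1]; linarith
    · intro i j τ; exact le_refl 0
    · intro i τ
      exact Finset.sum_nonneg fun j _ => by
        have := hf0 j i τ; have := hf0 i j τ; simp only [hf1]; linarith
    · intro i τ; simp [hx2]
    · intro i τ
      simp only [add_zero]
      rw [hx2]
      refine Finset.sum_congr rfl fun j _ => ?_
      simp only [hf1]; ring
    · intro τ
      have e1 : (∑ i, x2 i τ) = ((∑ i, ∑ j, f j i τ) + (∑ i, ∑ j, f i j τ)) / 2 := by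
        rw [show (∑ i, x2 i τ) = ∑ i, ((∑ j, f j i τ) + ∑ j, f i j τ) / 2 from
          Finset.sum_congr rfl fun i _ => hx2eq i τ, ← Finset.sum_div,
          Finset.sum_add_distrib]
      have e2 : (∑ i, ∑ j, f j i τ) = ∑ i, ∑ j, f i j τ := Finset.sum_comm
      have e3 : (∑ i, ∑ j, f i j τ) ≤ ∑ i, x i τ := by
        refine Finset.sum_le_sum fun i _ => ?_
        have := hsplit2 i τ
        have : 0 ≤ ∑ j, y i j τ := Finset.sum_nonneg fun j _ => hy0 i j τ
        linarith [hsplit2 i τ]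
      rw [e1, e2]
      have := hsup τ
      linarith
  -- revenue identity via market clearing
  have hS : ∀ (P : L → L → ℝ) (F : L → L → L → ℝ),
      (∀ i j, (∑ τ, F i j τ) = θfun i * α i j * (1 - P i j)) →
      (∑ i, ∑ j, ∑ τ, F i j τ * P i j)
        = ∑ i, ∑ j, θfun i * α i j * (1 - P i j) * P i j := by
    intro P F hMC
    refine Finset.sum_congr rfl fun i _ => Finset.sum_congr rfl fun j _ => ?_
    rw [← Finset.sum_mul, hMC i j]
  -- concavity: symmetrized prices earn at least as much gross revenue
  have hswap : (∑ i, ∑ j, θfun i * α i j * (1 - p i j) * p i j)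
      = ∑ i, ∑ j, θfun i * α i j * (1 - p j i) * p j i := by
    rw [Finset.sum_comm]
    refine Finset.sum_congr rfl fun i _ => Finset.sum_congr rfl fun j _ => ?_
    rw [hθ i, hθ j, hαs i j]
  have hconc : (∑ i, ∑ j, θfun i * α i j * (1 - p i j) * p i j)
      ≤ ∑ i, ∑ j, θfun i * α i j * (1 - p1 i j) * p1 i j := by
    have hAB : (∑ i, ∑ j, (θfun i * α i j * (1 - p i j) * p i j
          + θfun i * α i j * (1 - p j i) * p j i))
        ≤ ∑ i, ∑ j, 2 * (θfun i * α i j * (1 - p1 i j) * p1 i j) := by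
      refine Finset.sum_le_sum fun i _ => Finset.sum_le_sum fun j _ => ?_
      have hc : 0 ≤ θfun i * α i j := by
        rw [hθ i]; exact mul_nonneg hθpos.le (hα0 i j)
      simp only [hp1]
      nlinarith [mul_nonneg hc (sq_nonneg (p i j - p j i))]
    have hsplitA : (∑ i, ∑ j, (θfun i * α i j * (1 - p i j) * p i j
          + θfun i * α i j * (1 - p j i) * p j i))
        = (∑ i, ∑ j, θfun i * α i j * (1 - p i j) * p i j)
          + ∑ i, ∑ j, θfun i * α i j * (1 - p j i) * p j i := by
      rw [← Finset.sum_add_distrib]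
      exact Finset.sum_congr rfl fun i _ => Finset.sum_add_distrib
    have hsplitB : (∑ i, ∑ j, 2 * (θfun i * α i j * (1 - p1 i j) * p1 i j))
        = 2 * ∑ i, ∑ j, θfun i * α i j * (1 - p1 i j) * p1 i j := by
      rw [Finset.mul_sum]
      exact Finset.sum_congr rfl fun i _ => (Finset.mul_sum _ _ _).symm
    rw [hsplitA, hsplitB, ← hswap] at hAB
    linarith
  -- comparing the x-costs
  have hdiag : (∑ τ, (x τ τ - x2 τ τ)) ≤ ∑ i, ∑ τ, (x i τ - x2 i τ) := by
    calc (∑ τ, (x τ τ - x2 τ τ))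
        ≤ ∑ τ, ∑ i, (x i τ - x2 i τ) :=
          Finset.sum_le_sum fun τ _ =>
            Finset.single_le_sum (fun i _ => hYnn i τ) (Finset.mem_univ τ)
      _ = ∑ i, ∑ τ, (x i τ - x2 i τ) := Finset.sum_comm
  have hYtot : 0 ≤ ∑ i, ∑ τ, (x i τ - x2 i τ) :=
    Finset.sum_nonneg fun i _ => Finset.sum_nonneg fun τ _ => hYnn i τ
  have hsub1 : (∑ i, ∑ τ, (x i τ - x2 i τ))
      = (∑ i, ∑ τ, x i τ) - ∑ i, ∑ τ, x2 i τ := by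
    rw [← Finset.sum_sub_distrib]
    exact Finset.sum_congr rfl fun i _ => Finset.sum_sub_distrib _ _
  have hsub2 : (∑ τ, (x τ τ - x2 τ τ)) = (∑ τ, x τ τ) - ∑ τ, x2 τ τ :=
    Finset.sum_sub_distrib _ _
  -- revenue comparison
  have hrev : Revenue W I p f x ≤ Revenue W I p1 f1 x2 := by
    unfold Revenue
    rw [hS p f hmc, hS p1 f1 hmc1]
    rw [hsub1, hsub2] at hdiag
    rw [hsub1] at hYtot
    have hW : I * ((∑ τ, x τ τ) - ∑ τ, x2 τ τ)
        ≤ W * ((∑ i, ∑ τ, x i τ) - ∑ i, ∑ τ, x2 i τ) := by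
      have h1 : I * ((∑ τ, x τ τ) - ∑ τ, x2 τ τ)
          ≤ I * ((∑ i, ∑ τ, x i τ) - ∑ i, ∑ τ, x2 i τ) :=
        mul_le_mul_of_nonneg_left hdiag hInonneg
      nlinarith
    linarith [hconc]
  refine ⟨p1, f1, x2, fun _ _ _ => 0, hfeas1, ?_, ?_, ?_, fun _ _ _ => rfl⟩
  · intro p' f' x' y' hf'
    exact le_trans (hopt p' f' x' y' hf') hrev
  · intro i j; simp only [hp1]; ring
  · intro i j τ; simp only [hf1]; ring
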